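/- Every flat ABA+ framework satisfying the Axiom of Contraposition admits a unique <-grounded extension, namely the least fixed point of the <-defence operator Def. -/

import Mathlib

/-- A rule with a head and a (finite) body. A rule with empty body is a fact `head ← ⊤`. -/
structure ABARule (L : Type) where
  head : L
  body : List L

/-- Derivability (existence of a finite deduction tree) of a formula from a support set `S`
using rules in `Rs`: leaves are in `S` (or `⊤`, i.e. rules with empty body). -/
inductive Deduces {L : Type} (Rs : Set (ABARule L)) (S : Set L) : L → Prop
  | assumption {φ : L} (h : φ ∈ S) : Deduces Rs S φ
  | rule {r : ABARule L} (hr : r ∈ Rs) (h : ∀ b ∈ r.body, Deduces Rs S b) :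
      Deduces Rs S r.head

/-- An ABA⁺ framework: deductive system `(L, rules)`, non-empty set of assumptions,
total contrary map, and a preorder `le` on the assumptions. -/
structure ABAFramework (L : Type) where
  rules : Set (ABARule L)
  assumptions : Set L
  assumptions_nonempty : assumptions.Nonempty
  contrary : L → L
  le : L → L → Prop
  le_refl : ∀ a ∈ assumptions, le a a
  le_trans : ∀ a ∈ assumptions, ∀ b ∈ assumptions, ∀ c ∈ assumptions,
      le a b → le b c → le a c

namespace ABAFramework

variable {L : Type}

/-- Strict part of the preference preorder. -/
def lt (F : ABAFramework L) (a b : L) : Prop := F.le a b ∧ ¬ F.le b a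

/-- Standard (preference-free) ABA attack: some `A' ⊆ A` deduces the contrary of some `β ∈ B`. -/
def attacks (F : ABAFramework L) (A B : Set L) : Prop :=
  ∃ β ∈ B, ∃ A' ⊆ A, Deduces F.rules A' (F.contrary β)

/-- `<`-attack: normal attack or reverse attack. -/
def ltAttacks (F : ABAFramework L) (A B : Set L) : Prop :=
  (∃ β ∈ B, ∃ A' ⊆ A, Deduces F.rules A' (F.contrary β) ∧ ∀ α' ∈ A', ¬ F.lt α' β) ∨
  (∃ α ∈ A, ∃ B' ⊆ B, Deduces F.rules B' (F.contrary α) ∧ ∃ β' ∈ B', F.lt β' α)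

def conflictFree (F : ABAFramework L) (E : Set L) : Prop := ¬ F.attacks E E

def ltConflictFree (F : ABAFramework L) (E : Set L) : Prop := ¬ F.ltAttacks E E

def ltDefends (F : ABAFramework L) (E : Set L) (α : L) : Prop :=
  ∀ B ⊆ F.assumptions, F.ltAttacks B {α} → F.ltAttacks E B

def ltAdmissible (F : ABAFramework L) (E : Set L) : Prop :=
  E ⊆ F.assumptions ∧ F.ltConflictFree E ∧ ∀ α ∈ E, F.ltDefends E α

def stable (F : ABAFramework L) (E : Set L) : Prop :=
  E ⊆ F.assumptions ∧ F.conflictFree E ∧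
    ∀ β ∈ F.assumptions, β ∉ E → F.attacks E {β}

def ltStable (F : ABAFramework L) (E : Set L) : Prop :=
  E ⊆ F.assumptions ∧ F.ltConflictFree E ∧
    ∀ β ∈ F.assumptions, β ∉ E → F.ltAttacks E {β}

def ltComplete (F : ABAFramework L) (E : Set L) : Prop :=
  F.ltAdmissible E ∧ ∀ α ∈ F.assumptions, F.ltDefends E α → α ∈ E

def ltPreferred (F : ABAFramework L) (E : Set L) : Prop :=
  F.ltAdmissible E ∧ ∀ E', F.ltAdmissible E' → E ⊆ E' → E' = E

def ltGrounded (F : ABAFramework L) (E : Set L) : Prop :=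
  F.ltComplete E ∧ ∀ E', F.ltComplete E' → E' ⊆ E → E' = E

/-- `E` is `<`-admissible and contained in all `<`-preferred extensions. -/
def ltIdealCandidate (F : ABAFramework L) (E : Set L) : Prop :=
  F.ltAdmissible E ∧ ∀ P, F.ltPreferred P → E ⊆ P

def ltIdeal (F : ABAFramework L) (E : Set L) : Prop :=
  F.ltIdealCandidate E ∧ ∀ E', F.ltIdealCandidate E' → E ⊆ E' → E' = E

/-- Flatness: no assumption is the head of any rule. -/
def Flat (F : ABAFramework L) : Prop := ∀ r ∈ F.rules, r.head ∉ F.assumptions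

/-- Axiom of Contraposition. -/
def Contraposition (F : ABAFramework L) : Prop :=
  ∀ A' ⊆ F.assumptions, ∀ β ∈ F.assumptions,
    Deduces F.rules A' (F.contrary β) →
      ∀ α ∈ A', Deduces F.rules ((A' \ {α}) ∪ {β}) (F.contrary α)

/-- Axiom of Weak Contraposition. -/
def WeakContraposition (F : ABAFramework L) : Prop :=
  ∀ A' ⊆ F.assumptions, ∀ β ∈ F.assumptions,
    Deduces F.rules A' (F.contrary β) → (∃ α ∈ A', F.lt α β) →
      ∃ α ∈ A', F.lt α β ∧ Deduces F.rules ((A' \ {α}) ∪ {β}) (F.contrary α)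

/-- The `<`-defence operator `Def`. -/
def DefOp (F : ABAFramework L) (A : Set L) : Set L :=
  {α ∈ F.assumptions | F.ltDefends A α}

/-- Conclusions of a set `E`. -/
def Cn (F : ABAFramework L) (E : Set L) : Set L :=
  {φ | ∃ S ⊆ E, Deduces F.rules S φ}

end ABAFramework

namespace ABAProofAux


open Relation

/-- One step of the Dershowitz–Manna order on multisets of ordinals:
remove one element `a`, add arbitrarily many elements all `< a`. -/
def OneStep (N M : Multiset Ordinal) : Prop :=
  ∃ a K Q, M = a ::ₘ K ∧ N = K + Q ∧ ∀ q ∈ Q, q < a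

theorem onestep_cons_cases {a : Ordinal} {M N : Multiset Ordinal}
    (h : OneStep N (a ::ₘ M)) :
    (∃ Q, (∀ q ∈ Q, q < a) ∧ N = M + Q) ∨ (∃ M', OneStep M' M ∧ N = a ::ₘ M') := by
  obtain ⟨c, K, Q, hM, hN, hQ⟩ := h
  rcases Multiset.cons_eq_cons.1 hM with ⟨rfl, rfl⟩ | ⟨hne, u, hKu, hMu⟩
  · exact Or.inl ⟨Q, hQ, hN⟩
  · subst hN hKu hMu
    exact Or.inr ⟨u + Q, ⟨c, u, Q, rfl, rfl, hQ⟩, by rw [Multiset.cons_add]⟩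

theorem acc_add_of_lt {a : Ordinal}
    (IH : ∀ b < a, ∀ M : Multiset Ordinal, Acc OneStep M → Acc OneStep (b ::ₘ M)) :
    ∀ Q : Multiset Ordinal, (∀ q ∈ Q, q < a) → ∀ M, Acc OneStep M → Acc OneStep (M + Q) := by
  intro Q
  induction Q using Multiset.induction with
  | empty => intro _ M h; simpa using h
  | cons q Q ihQ =>
    intro hq M hM
    have h1 : M + q ::ₘ Q = q ::ₘ (M + Q) := by
      rw [Multiset.add_cons]
    rw [h1]
    exact IH q (hq q (Multiset.mem_cons_self _ _)) _
      (ihQ (fun x hx => hq x (Multiset.mem_cons_of_mem hx)) M hM)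

theorem acc_cons (a : Ordinal) : ∀ M, Acc OneStep M → Acc OneStep (a ::ₘ M) := by
  induction a using Ordinal.induction with
  | h a IH =>
    intro M hM
    induction hM with
    | intro M hM ihM =>
      constructor
      intro N hN
      rcases onestep_cons_cases hN with ⟨Q, hQ, rfl⟩ | ⟨M', hM', rfl⟩
      · exact acc_add_of_lt IH Q hQ M ⟨M, hM⟩
      · exact ihM M' hM'

theorem onestep_wf : WellFounded OneStep := by
  constructor
  intro M
  induction M using Multiset.induction with
  | empty =>
    constructor
    intro N h
    obtain ⟨a, K, Q, hM, _, _⟩ := h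
    exact absurd hM (by simp)
  | cons a M ih => exact acc_cons a M ih

/-- The (transitive closure of the) Dershowitz–Manna order. -/
def MLT (N M : Multiset Ordinal) : Prop := TransGen OneStep N M

theorem mlt_wf : WellFounded MLT := onestep_wf.transGen

theorem rtg_removal (X : Multiset Ordinal) :
    ∀ M : Multiset Ordinal, ReflTransGen OneStep M (M + X) := by
  induction X using Multiset.induction with
  | empty => intro M; simpa using ReflTransGen.refl
  | cons x X ih =>
    intro M
    have h1 : OneStep (M + X) (M + x ::ₘ X) := by
      refine ⟨x, M + X, 0, ?_, by simp, by simp⟩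
      rw [Multiset.add_cons]
    exact (ih M).tail h1

theorem mlt_of (Z X Y : Multiset Ordinal) (c : Ordinal) (hc : c ∈ X)
    (hY : ∀ y ∈ Y, y < c) : MLT (Z + Y) (Z + X) := by
  have key : OneStep ((Z + Y) + X.erase c) (Z + X) := by
    refine ⟨c, Z + X.erase c, Y, ?_, ?_, hY⟩
    · rw [← Multiset.add_cons, Multiset.cons_erase hc]
    · rw [add_right_comm]
  exact TransGen.tail' (rtg_removal (X.erase c) (Z + Y)) key


variable {L : Type}

theorem deduces_mono {Rs : Set (ABARule L)} {S S' : Set L} (h : S ⊆ S') {φ : L}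
    (hd : Deduces Rs S φ) : Deduces Rs S' φ := by
  induction hd with
  | assumption h' => exact .assumption (h h')
  | rule hr _ ih => exact .rule hr ih

theorem finite_union_supports {Rs : Set (ABARule L)} {S : Set L} :
    ∀ l : List L, (∀ b ∈ l, ∃ U : Finset L, ↑U ⊆ S ∧ Deduces Rs ↑U b) →
      ∃ U : Finset L, ↑U ⊆ S ∧ ∀ b ∈ l, Deduces Rs ↑U b
  | [], _ => ⟨∅, by simp, by simp⟩
  | b :: l, h => by
    classical
    obtain ⟨U1, hU1, hd1⟩ := h b (by simp)
    obtain ⟨U2, hU2, hd2⟩ := finite_union_supports l (fun x hx => h x (by simp [hx]))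
    refine ⟨U1 ∪ U2, ?_, ?_⟩
    · push_cast
      exact Set.union_subset hU1 hU2
    · intro x hx
      rcases List.mem_cons.1 hx with rfl | hx
      · exact deduces_mono (by push_cast; exact Set.subset_union_left) hd1
      · exact deduces_mono (by push_cast; exact Set.subset_union_right) (hd2 x hx)

theorem deduces_finite {Rs : Set (ABARule L)} {S : Set L} {φ : L}
    (hd : Deduces Rs S φ) : ∃ U : Finset L, ↑U ⊆ S ∧ Deduces Rs ↑U φ := by
  induction hd with
  | assumption h => exact ⟨{_}, by simpa, .assumption (by simp)⟩
  | rule hr _ ih =>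
    obtain ⟨U, hU, hall⟩ := finite_union_supports _ ih
    exact ⟨U, hU, .rule hr hall⟩

variable (F : ABAFramework L)

theorem lt_irrefl' (x : L) : ¬ F.lt x x := fun ⟨h, hn⟩ => hn h

theorem lt_trans' {x y z : L} (hx : x ∈ F.assumptions) (hy : y ∈ F.assumptions)
    (hz : z ∈ F.assumptions) (h1 : F.lt x y) (h2 : F.lt y z) : F.lt x z :=
  ⟨F.le_trans x hx y hy z hz h1.1 h2.1,
   fun h => h2.2 (F.le_trans z hz x hx y hy h h1.1)⟩

/-- A finite nonempty set of assumptions has a `<`-minimal element. -/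
theorem exists_min (T : Finset L) (hne : T.Nonempty) (hsub : ↑T ⊆ F.assumptions) :
    ∃ f ∈ T, ∀ t ∈ T, ¬ F.lt t f := by
  classical
  induction T using Finset.induction_on with
  | empty => exact absurd hne (by simp)
  | @insert a s ha ih =>
    rcases s.eq_empty_or_nonempty with rfl | hs
    · refine ⟨a, by simp, ?_⟩
      intro t ht
      simp only [Finset.mem_insert, Finset.notMem_empty, or_false] at ht
      subst ht
      exact lt_irrefl' F t
    · obtain ⟨m, hm, hmmin⟩ := ih hs (fun x hx => hsub (by simp [hx]))
      by_cases ham : F.lt a m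
      · refine ⟨a, by simp, ?_⟩
        intro t ht hta
        rcases Finset.mem_insert.1 ht with rfl | hts
        · exact lt_irrefl' F t hta
        · exact hmmin t hts (lt_trans' F (hsub (by simp [hts])) (hsub (by simp))
            (hsub (by simp [hm])) hta ham)
      · refine ⟨m, by simp [hm], ?_⟩
        intro t ht
        rcases Finset.mem_insert.1 ht with rfl | hts
        · exact fun h => ham h
        · exact hmmin t hts

theorem ltAttacks_mono_left {A A' B : Set L} (h : A ⊆ A') (hatt : F.ltAttacks A B) :
    F.ltAttacks A' B := by
  rcases hatt with ⟨β, hβ, C, hC, hd, hn⟩ | ⟨α, hα, C, hC, hd, hw⟩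
  · exact Or.inl ⟨β, hβ, C, hC.trans h, hd, hn⟩
  · exact Or.inr ⟨α, h hα, C, hC, hd, hw⟩

/-- The `<`-defence operator as a monotone map. -/
def defHom : Set L →o Set L :=
  ⟨F.DefOp, by
    intro A B hAB x hx
    exact ⟨hx.1, fun C hC hatt => ltAttacks_mono_left F hAB (hx.2 C hC hatt)⟩⟩


variable {L : Type}
section Appr
variable (F : ABAFramework L)

/-- Transfinite approximants of the least fixed point of `Def`. -/
noncomputable def appr : Ordinal → Set L := OrdinalApprox.lfpApprox (defHom F) ⊥

/-- The least fixed point of `Def`. -/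
def Gr : Set L := OrderHom.lfp (defHom F)

/-- rank of an assumption in the approximation hierarchy -/
noncomputable def nu (x : L) : Ordinal := sInf {o | x ∈ F.DefOp (appr F o)}

theorem Gr_fixed : F.DefOp (Gr F) = Gr F := OrderHom.map_lfp (defHom F)

theorem appr_omega :
    appr F (Cardinal.ord (Order.succ (Cardinal.mk (Set L)))) = Gr F :=
  OrdinalApprox.lfpApprox_ord_eq_lfp (defHom F)

theorem Gr_sub_assumptions : Gr F ⊆ F.assumptions := by
  rw [← Gr_fixed]
  exact fun x hx => hx.1

variable {F}

theorem nu_set_nonempty {g : L} (hg : g ∈ Gr F) :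
    {o | g ∈ F.DefOp (appr F o)}.Nonempty := by
  refine ⟨Cardinal.ord (Order.succ (Cardinal.mk (Set L))), ?_⟩
  simp only [Set.mem_setOf_eq, appr_omega]
  rw [Gr_fixed]
  exact hg

theorem nu_mem {g : L} (hg : g ∈ Gr F) : g ∈ F.DefOp (appr F (nu F g)) :=
  csInf_mem (nu_set_nonempty hg)

theorem appr_sub_Gr {g : L} (hg : g ∈ Gr F) : appr F (nu F g) ⊆ Gr F := by
  have h1 : nu F g ≤ Cardinal.ord (Order.succ (Cardinal.mk (Set L))) :=
    csInf_le (OrderBot.bddBelow _) (by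
      simp only [Set.mem_setOf_eq, appr_omega]
      rw [Gr_fixed]; exact hg)
  rw [← appr_omega F]
  exact OrdinalApprox.lfpApprox_monotone (defHom F) (x := ⊥) h1

theorem mem_appr_elim {e : L} {a : Ordinal} (he : e ∈ appr F a) :
    ∃ b < a, e ∈ F.DefOp (appr F b) := by
  rw [appr, OrdinalApprox.lfpApprox] at he
  simp only [Set.bot_eq_empty, Set.sup_eq_union, Set.iSup_eq_iUnion, Set.empty_union,
    Set.mem_iUnion] at he
  obtain ⟨b, hb, het⟩ := he
  exact ⟨b, hb, het⟩

theorem nu_lt {g e : L} (he : e ∈ appr F (nu F g)) : nu F e < nu F g := by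
  obtain ⟨b, hb, hmem⟩ := mem_appr_elim he
  exact lt_of_le_of_lt (csInf_le (OrderBot.bddBelow _) hmem) hb

theorem not_mem_appr_nu {g : L} (hg : g ∈ Gr F) : g ∉ appr F (nu F g) := by
  intro h
  exact absurd (nu_lt h) (lt_irrefl _)

end Appr


section Main
variable [DecidableEq L] (F : ABAFramework L)

/-- A "bad pair": a finite standard attack within the least fixed point. -/
def Bad (S : Finset L) (b : L) : Prop :=
  ↑S ⊆ Gr F ∧ b ∈ Gr F ∧ b ∉ S ∧ Deduces F.rules ↑S (F.contrary b)

/-- measure of a pair: the multiset of ranks -/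
noncomputable def mu (S : Finset L) (b : L) : Multiset Ordinal :=
  (insert b S).val.map (nu F)

theorem mu_def (S : Finset L) (b : L) :
    mu F S b = (insert b S).val.map (nu F) := rfl

theorem mlt_dom {m m0 : Multiset Ordinal} {c : Ordinal} (hc : c ∈ m0)
    (h : ∀ y ∈ m, y < c) : MLT m m0 := by
  simpa using mlt_of 0 m0 m c hc h

theorem split_mu {T U : Finset L} {f : L} (hf : f ∈ T) (hU : U ⊆ T.erase f) :
    ∃ X, T.val.map (nu F) = U.val.map (nu F) + X ∧ nu F f ∈ X := by
  have h1 : U.val ≤ (T.erase f).val := Finset.val_le_iff.2 hU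
  rw [Finset.erase_val] at h1
  obtain ⟨W, hW⟩ := Multiset.le_iff_exists_add.1 h1
  refine ⟨nu F f ::ₘ W.map (nu F), ?_, Multiset.mem_cons_self _ _⟩
  have h2 : T.val = f ::ₘ T.val.erase f := (Multiset.cons_erase (Finset.mem_def.1 hf)).symm
  rw [h2, hW, Multiset.map_cons, Multiset.map_add, ← Multiset.singleton_add,
    ← Multiset.singleton_add, add_left_comm]

variable {F}

theorem self_bad (hγG : ∀ {g : L}, g ∈ Gr F → g ∈ F.assumptions) {γ : L}
    (hγ : γ ∈ Gr F) (hded : Deduces F.rules {γ} (F.contrary γ)) :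
    ∃ S b, Bad F S b ∧ ∀ o ∈ mu F S b, o ≤ nu F γ := by
  have hγasm : γ ∈ F.assumptions := hγG hγ
  have hatt : F.ltAttacks {γ} {γ} := by
    refine Or.inl ⟨γ, rfl, {γ}, subset_rfl, hded, ?_⟩
    intro x hx
    rw [Set.mem_singleton_iff] at hx
    subst hx
    exact lt_irrefl' F x
  have hdefense : F.ltAttacks (appr F (nu F γ)) {γ} :=
    (nu_mem hγ).2 {γ} (Set.singleton_subset_iff.2 hγasm) hatt
  rcases hdefense with ⟨ε, hε, A', hA', hdedA', -⟩ | ⟨a0, ha0, B', hB', hdedB', b', hb', -⟩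
  · rw [Set.mem_singleton_iff] at hε
    subst hε
    obtain ⟨A, hAsub, hdedA⟩ := deduces_finite hdedA'
    have hAappr : ↑A ⊆ appr F (nu F ε) := hAsub.trans hA'
    refine ⟨A, ε, ⟨fun x hx => appr_sub_Gr hγ (hAappr hx), hγ,
      fun h => not_mem_appr_nu hγ (hAappr (Finset.mem_coe.2 h)), hdedA⟩, ?_⟩
    intro o ho
    rw [mu_def] at ho
    obtain ⟨x, hx, rfl⟩ := Multiset.mem_map.1 ho
    rcases Finset.mem_insert.1 hx with rfl | hxA
    · exact le_rfl
    · exact le_of_lt (nu_lt (hAappr (Finset.mem_coe.2 hxA)))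
  · have hb'γ : b' = γ := Set.mem_singleton_iff.1 (hB' hb')
    subst hb'γ
    have hB'eq : B' = {b'} := Set.Subset.antisymm hB' (Set.singleton_subset_iff.2 hb')
    rw [hB'eq] at hdedB'
    have ha0ne : a0 ≠ b' := fun h => not_mem_appr_nu hγ (h ▸ ha0)
    refine ⟨{b'}, a0, ⟨by simpa using hγ, appr_sub_Gr hγ ha0, by simpa using ha0ne, ?_⟩, ?_⟩
    · simpa using hdedB'
    · intro o ho
      rw [mu_def] at ho
      obtain ⟨x, hx, rfl⟩ := Multiset.mem_map.1 ho
      rcases Finset.mem_insert.1 (Finset.mem_def.2 hx) with rfl | hxs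
      · exact le_of_lt (nu_lt ha0)
      · rw [Finset.mem_singleton] at hxs
        subst hxs
        exact le_rfl

theorem no_bad (hcp : F.Contraposition) : ¬ ∃ S b, Bad F S b := by
  rintro ⟨S0, b0, hB0⟩
  have hGasm : ∀ {g : L}, g ∈ Gr F → g ∈ F.assumptions := fun hg => Gr_sub_assumptions F hg
  obtain ⟨m0, hm0mem, hmin⟩ := mlt_wf.has_min {m | ∃ S b, Bad F S b ∧ mu F S b = m}
    ⟨_, S0, b0, hB0, rfl⟩
  obtain ⟨S, β, hBad, hμeq⟩ := hm0mem
  have hkill : ∀ (S' : Finset L) (b' : L), Bad F S' b' → MLT (mu F S' b') m0 → False :=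
    fun S' b' hb hm => hmin _ ⟨S', b', hb, rfl⟩ hm
  obtain ⟨hSG, hβG, hβS, hded⟩ := hBad
  set T : Finset L := insert β S with hTdef
  have hTG : ↑T ⊆ Gr F := by
    intro x hx
    rcases Finset.mem_insert.1 (Finset.mem_coe.1 hx) with rfl | hxS
    · exact hβG
    · exact hSG (Finset.mem_coe.2 hxS)
  have hTasm : ↑T ⊆ F.assumptions := fun x hx => hGasm (hTG hx)
  have hTne : T.Nonempty := ⟨β, Finset.mem_insert_self _ _⟩
  obtain ⟨f, hfT, hfmin⟩ := exists_min F T hTne hTasm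
  have hfG : f ∈ Gr F := hTG (Finset.mem_coe.2 hfT)
  have hfasm : f ∈ F.assumptions := hGasm hfG
  have hμ0 : m0 = T.val.map (nu F) := by rw [← hμeq, mu_def, hTdef]
  have hfm0 : nu F f ∈ m0 := by
    rw [hμ0]
    exact Multiset.mem_map_of_mem _ (Finset.mem_def.1 hfT)
  -- the contrary of f is deducible from T.erase f
  have hSfded : Deduces F.rules ↑(T.erase f) (F.contrary f) := by
    by_cases hfβ : f = β
    · subst hfβ
      rw [hTdef, Finset.erase_insert hβS]
      exact hded
    · have hfS : f ∈ S := by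
        rcases Finset.mem_insert.1 hfT with h | h
        · exact absurd h hfβ
        · exact h
      have hSasm : ↑S ⊆ F.assumptions := fun x hx => hGasm (hSG hx)
      have h1 := hcp ↑S hSasm β (hGasm hβG) hded f (Finset.mem_coe.2 hfS)
      refine deduces_mono ?_ h1
      intro x hx
      rcases hx with ⟨hxS, hxf⟩ | hxβ
      · exact Finset.mem_coe.2 (Finset.mem_erase.2 ⟨hxf, Finset.mem_insert_of_mem (Finset.mem_coe.1 hxS)⟩)
      · rw [Set.mem_singleton_iff] at hxβ
        subst hxβ
        exact Finset.mem_coe.2 (Finset.mem_erase.2 ⟨fun h => hfβ h.symm, Finset.mem_insert_self _ _⟩)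
  have hatt : F.ltAttacks ↑(T.erase f) {f} := by
    refine Or.inl ⟨f, rfl, ↑(T.erase f), subset_rfl, hSfded, ?_⟩
    intro x hx
    exact hfmin x (Finset.mem_of_mem_erase (Finset.mem_coe.1 hx))
  have hTeasm : (↑(T.erase f) : Set L) ⊆ F.assumptions :=
    fun x hx => hTasm (Finset.mem_coe.2 (Finset.mem_of_mem_erase (Finset.mem_coe.1 hx)))
  have hdefense : F.ltAttacks (appr F (nu F f)) ↑(T.erase f) :=
    (nu_mem hfG).2 ↑(T.erase f) hTeasm hatt
  rcases hdefense with ⟨ε, hεmem, A', hA'sub, hdedA', -⟩ | ⟨e2, he2mem, B', hB'sub, hdedB', -, -, -⟩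
  · -- normal defence response
    have hεTe : ε ∈ T.erase f := Finset.mem_coe.1 hεmem
    have hεT : ε ∈ T := Finset.mem_of_mem_erase hεTe
    have hεf : ε ≠ f := Finset.ne_of_mem_erase hεTe
    have hεG : ε ∈ Gr F := hTG (Finset.mem_coe.2 hεT)
    obtain ⟨A, hAA', hdedA⟩ := deduces_finite hdedA'
    have hAappr : ↑A ⊆ appr F (nu F f) := hAA'.trans hA'sub
    have hAG : ↑A ⊆ Gr F := fun x hx => appr_sub_Gr hfG (hAappr hx)
    have hArank : ∀ a ∈ A, nu F a < nu F f :=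
      fun a ha => nu_lt (hAappr (Finset.mem_coe.2 ha))
    by_cases hεA : ε ∈ A
    · by_cases hex : ∃ t ∈ A, t ≠ ε
      · obtain ⟨t, htA, htε⟩ := hex
        have hAasm : ↑A ⊆ F.assumptions := fun x hx => hGasm (hAG hx)
        have h1 := hcp ↑A hAasm ε (hGasm hεG) hdedA t (Finset.mem_coe.2 htA)
        have h2 : Deduces F.rules ↑(A.erase t) (F.contrary t) := by
          refine deduces_mono ?_ h1
          intro x hx
          rcases hx with ⟨hxA, hxt⟩ | hxε
          · exact Finset.mem_coe.2 (Finset.mem_erase.2 ⟨hxt, Finset.mem_coe.1 hxA⟩)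
          · rw [Set.mem_singleton_iff] at hxε
            subst hxε
            exact Finset.mem_coe.2 (Finset.mem_erase.2 ⟨fun h => htε h.symm, hεA⟩)
        refine hkill (A.erase t) t ⟨?_, hAG (Finset.mem_coe.2 htA), Finset.notMem_erase t A, h2⟩ ?_
        · exact fun x hx => hAG (Finset.mem_coe.2 (Finset.mem_of_mem_erase (Finset.mem_coe.1 hx)))
        · rw [mu_def, Finset.insert_erase htA]
          refine mlt_dom hfm0 ?_
          intro y hy
          obtain ⟨a, ha, rfl⟩ := Multiset.mem_map.1 hy
          exact hArank a ha
      · push_neg at hex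
        have hA : A = {ε} := Finset.eq_singleton_iff_unique_mem.2 ⟨hεA, hex⟩
        rw [hA] at hdedA
        obtain ⟨S', b', hBad', hbound⟩ := self_bad hGasm hεG (by simpa using hdedA)
        refine hkill S' b' hBad' (mlt_dom hfm0 ?_)
        intro y hy
        exact lt_of_le_of_lt (hbound y hy) (hArank ε hεA)
    · refine hkill A ε ⟨hAG, hεG, hεA, hdedA⟩ ?_
      have e1 : mu F A ε = {nu F ε} + A.val.map (nu F) := by
        rw [mu_def, Finset.insert_val_of_notMem hεA, Multiset.map_cons, Multiset.singleton_add]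
      have hεTv : ε ∈ T.val := Finset.mem_def.1 hεT
      have e2 : m0 = {nu F ε} + (T.val.erase ε).map (nu F) := by
        rw [hμ0]
        conv_lhs => rw [← Multiset.cons_erase hεTv]
        rw [Multiset.map_cons, Multiset.singleton_add]
      rw [e1, e2]
      refine mlt_of _ _ _ (nu F f) ?_ ?_
      · exact Multiset.mem_map_of_mem _ ((Multiset.mem_erase_of_ne hεf.symm).2 (Finset.mem_def.1 hfT))
      · intro y hy
        obtain ⟨a, ha, rfl⟩ := Multiset.mem_map.1 hy
        exact hArank a ha
  · -- reverse defence response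
    have he2G : e2 ∈ Gr F := appr_sub_Gr hfG he2mem
    have he2rank : nu F e2 < nu F f := nu_lt he2mem
    obtain ⟨U, hUB', hdedU⟩ := deduces_finite hdedB'
    have hUTe : U ⊆ T.erase f := Finset.coe_subset.1 (hUB'.trans hB'sub)
    have hUT : U ⊆ T := hUTe.trans (Finset.erase_subset f T)
    have hUG : ↑U ⊆ Gr F := fun x hx => hTG (Finset.coe_subset.2 hUT hx)
    obtain ⟨X, hXeq, hXmem⟩ := split_mu F hfT hUTe
    by_cases he2U : e2 ∈ U
    · by_cases hex : ∃ t ∈ U, t ≠ e2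
      · obtain ⟨t, htU, hte⟩ := hex
        have hUasm : ↑U ⊆ F.assumptions := fun x hx => hGasm (hUG hx)
        have h1 := hcp ↑U hUasm e2 (hGasm he2G) hdedU t (Finset.mem_coe.2 htU)
        have h2 : Deduces F.rules ↑(U.erase t) (F.contrary t) := by
          refine deduces_mono ?_ h1
          intro x hx
          rcases hx with ⟨hxU, hxt⟩ | hxe
          · exact Finset.mem_coe.2 (Finset.mem_erase.2 ⟨hxt, Finset.mem_coe.1 hxU⟩)
          · rw [Set.mem_singleton_iff] at hxe
            subst hxe
            exact Finset.mem_coe.2 (Finset.mem_erase.2 ⟨fun h => hte h.symm, he2U⟩)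
        refine hkill (U.erase t) t ⟨?_, hUG (Finset.mem_coe.2 htU), Finset.notMem_erase t U, h2⟩ ?_
        · exact fun x hx => hUG (Finset.mem_coe.2 (Finset.mem_of_mem_erase (Finset.mem_coe.1 hx)))
        · rw [mu_def, Finset.insert_erase htU]
          rw [hμ0, hXeq]
          simpa using mlt_of (U.val.map (nu F)) X 0 (nu F f) hXmem (by simp)
      · push_neg at hex
        have hU : U = {e2} := Finset.eq_singleton_iff_unique_mem.2 ⟨he2U, hex⟩
        rw [hU] at hdedU
        obtain ⟨S', b', hBad', hbound⟩ := self_bad hGasm he2G (by simpa using hdedU)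
        refine hkill S' b' hBad' (mlt_dom hfm0 ?_)
        intro y hy
        exact lt_of_le_of_lt (hbound y hy) he2rank
    · refine hkill U e2 ⟨hUG, he2G, he2U, hdedU⟩ ?_
      have e1 : mu F U e2 = U.val.map (nu F) + {nu F e2} := by
        rw [mu_def, Finset.insert_val_of_notMem he2U, Multiset.map_cons,
          ← Multiset.singleton_add, add_comm]
      rw [e1, hμ0, hXeq]
      refine mlt_of _ _ _ (nu F f) hXmem ?_
      intro y hy
      rw [Multiset.mem_singleton] at hy
      subst hy
      exact he2rank

end Main
section Final
variable {L : Type} [DecidableEq L] {F : ABAFramework L}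

theorem bad_of_general (hcp : F.Contraposition) {A : Finset L} {β : L}
    (hA : ↑A ⊆ Gr F) (hβ : β ∈ Gr F)
    (hded : Deduces F.rules ↑A (F.contrary β)) : ∃ S b, Bad F S b := by
  have hGasm : ∀ {g : L}, g ∈ Gr F → g ∈ F.assumptions := fun hg => Gr_sub_assumptions F hg
  by_cases hβA : β ∈ A
  · by_cases hex : ∃ t ∈ A, t ≠ β
    · obtain ⟨t, htA, htβ⟩ := hex
      have hAasm : ↑A ⊆ F.assumptions := fun x hx => hGasm (hA hx)
      have h1 := hcp ↑A hAasm β (hGasm hβ) hded t (Finset.mem_coe.2 htA)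
      have h2 : Deduces F.rules ↑(A.erase t) (F.contrary t) := by
        refine deduces_mono ?_ h1
        intro x hx
        rcases hx with ⟨hxA, hxt⟩ | hxβ
        · exact Finset.mem_coe.2 (Finset.mem_erase.2 ⟨hxt, Finset.mem_coe.1 hxA⟩)
        · rw [Set.mem_singleton_iff] at hxβ
          subst hxβ
          exact Finset.mem_coe.2 (Finset.mem_erase.2 ⟨fun h => htβ h.symm, hβA⟩)
      exact ⟨A.erase t, t,
        fun x hx => hA (Finset.mem_coe.2 (Finset.mem_of_mem_erase (Finset.mem_coe.1 hx))),
        hA (Finset.mem_coe.2 htA), Finset.notMem_erase t A, h2⟩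
    · push_neg at hex
      have hAeq : A = {β} := Finset.eq_singleton_iff_unique_mem.2 ⟨hβA, hex⟩
      rw [hAeq] at hded
      obtain ⟨S', b', hBad', -⟩ := self_bad hGasm hβ (by simpa using hded)
      exact ⟨S', b', hBad'⟩
  · exact ⟨A, β, hA, hβ, hβA, hded⟩

theorem lfp_cf (hcp : F.Contraposition) : F.ltConflictFree (Gr F) := by
  intro hatt
  refine no_bad hcp ?_
  rcases hatt with ⟨b, hb, A', hA', hded, -⟩ | ⟨a, ha, B', hB', hded, -, -, -⟩
  · obtain ⟨A, hAsub, hdedA⟩ := deduces_finite hded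
    exact bad_of_general hcp (hAsub.trans hA') hb hdedA
  · obtain ⟨A, hAsub, hdedA⟩ := deduces_finite hded
    exact bad_of_general hcp (hAsub.trans hB') ha hdedA

end Final
end ABAProofAux


open ABAFramework

theorem stmt7 {L : Type} (F : ABAFramework L) (hflat : F.Flat)
    (hcp : F.Contraposition) :
    ∃ G : Set L, F.ltGrounded G ∧ (∀ G', F.ltGrounded G' → G' = G) ∧
      F.DefOp G = G ∧ (∀ X ⊆ F.assumptions, F.DefOp X = X → G ⊆ X) := by
  classical
  have hfix : F.DefOp (ABAProofAux.Gr F) = ABAProofAux.Gr F := ABAProofAux.Gr_fixed F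
  have hGasm : ABAProofAux.Gr F ⊆ F.assumptions := ABAProofAux.Gr_sub_assumptions F
  have hcf : F.ltConflictFree (ABAProofAux.Gr F) := ABAProofAux.lfp_cf hcp
  have hadm : F.ltAdmissible (ABAProofAux.Gr F) := by
    refine ⟨hGasm, hcf, fun α hα => ?_⟩
    have h1 : α ∈ F.DefOp (ABAProofAux.Gr F) := hfix.symm ▸ hα
    exact h1.2
  have hcomp : F.ltComplete (ABAProofAux.Gr F) := by
    refine ⟨hadm, fun α hαasm hdef => ?_⟩
    have h1 : α ∈ F.DefOp (ABAProofAux.Gr F) := ⟨hαasm, hdef⟩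
    exact hfix ▸ h1
  have hfixed_of_complete : ∀ E', F.ltComplete E' → F.DefOp E' = E' := by
    rintro E' ⟨⟨hsub, hcf', hdef'⟩, hclosed⟩
    apply Set.Subset.antisymm
    · intro x hx
      exact hclosed x hx.1 hx.2
    · intro x hx
      exact ⟨hsub hx, hdef' x hx⟩
  have hleast : ∀ X : Set L, F.DefOp X = X → ABAProofAux.Gr F ⊆ X := by
    intro X hX
    exact OrderHom.lfp_le_fixed (f := ABAProofAux.defHom F) hX
  refine ⟨ABAProofAux.Gr F, ⟨hcomp, ?_⟩, ?_, hfix, fun X _ hX => hleast X hX⟩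
  · intro E' hE' hsub
    exact Set.Subset.antisymm hsub (hleast E' (hfixed_of_complete E' hE'))
  · rintro G' ⟨hG'c, hG'min⟩
    exact (hG'min (ABAProofAux.Gr F) hcomp (hleast G' (hfixed_of_complete G' hG'c))).symm
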